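/- Let d, k, N be integers with N > d > k ≥ 1 and define S_j := Σ_{i=0}^{d-j-2} binom(N-j-1, i) for 0 ≤ j ≤ d-2 (and S_j := 0 for j ≥ d-1). Then S_k / binom(N-k-1, d-k-1) < S_0 / binom(N-1, d-1). -/
import Mathlib


open Filter Finset Real

/-- `S d N j = Σ_{i=0}^{d-j-2} C(N-j-1, i)` (a partial binomial sum); by natural
subtraction this is the empty sum `0` when `j ≥ d-1`. -/
noncomputable def S (d N j : ℕ) : ℝ :=
  ∑ i ∈ Finset.range (d - j - 1), ((N - j - 1).choose i : ℝ)

lemma choose_cross (n t i : ℕ) (hit : i ≤ t) :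
    n.choose i * (n + 1).choose (t + 1) ≤ (n + 1).choose (i + 1) * n.choose t := by
  have h1 : (n + 1) * n.choose t = (n + 1).choose (t + 1) * (t + 1) := by
    simpa [Nat.succ_eq_add_one] using Nat.add_one_mul_choose_eq n t
  have h2 : (n + 1) * n.choose i = (n + 1).choose (i + 1) * (i + 1) := by
    simpa [Nat.succ_eq_add_one] using Nat.add_one_mul_choose_eq n i
  have key : n.choose i * (n + 1).choose (t + 1) * ((t + 1) * (i + 1)) ≤
      (n + 1).choose (i + 1) * n.choose t * ((t + 1) * (i + 1)) := by
    have e1 : n.choose i * (n + 1).choose (t + 1) * ((t + 1) * (i + 1)) =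
        ((n + 1) * n.choose t) * (n.choose i * (i + 1)) := by
      rw [h1]; ring
    have e2 : (n + 1).choose (i + 1) * n.choose t * ((t + 1) * (i + 1)) =
        ((n + 1) * n.choose i) * (n.choose t * (t + 1)) := by
      rw [h2]; ring
    rw [e1, e2]
    have : n.choose i * (i + 1) ≤ n.choose i * (t + 1) :=
      Nat.mul_le_mul_left _ (by omega)
    calc (n + 1) * n.choose t * (n.choose i * (i + 1))
        ≤ (n + 1) * n.choose t * (n.choose i * (t + 1)) :=
          Nat.mul_le_mul_left _ this
      _ = (n + 1) * n.choose i * (n.choose t * (t + 1)) := by ring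
  exact Nat.le_of_mul_le_mul_right key (by positivity)

/-- One-step lemma: with `M = n+1`, `m = t+1`, `m < M`,
`(Σ_{i<m-1} C(M-1,i)) / C(M-1,m-1) < (Σ_{i<m} C(M,i)) / C(M,m)`. -/
lemma step_lemma (n t : ℕ) (htn : t < n) :
    (∑ i ∈ Finset.range t, (n.choose i : ℝ)) / (n.choose t : ℝ) <
      (∑ i ∈ Finset.range (t + 1), ((n + 1).choose i : ℝ)) / ((n + 1).choose (t + 1) : ℝ) := by
  have hd1 : (0 : ℝ) < (n.choose t : ℝ) := by
    exact_mod_cast Nat.choose_pos (le_of_lt htn)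
  have hd2 : (0 : ℝ) < ((n + 1).choose (t + 1) : ℝ) := by
    exact_mod_cast Nat.choose_pos (by omega)
  rw [div_lt_div_iff₀ hd1 hd2]
  rw [Finset.sum_range_succ']
  have hterm : ∀ i ∈ Finset.range t,
      (n.choose i : ℝ) * ((n + 1).choose (t + 1) : ℝ) ≤
        ((n + 1).choose (i + 1) : ℝ) * (n.choose t : ℝ) := by
    intro i hi
    rw [Finset.mem_range] at hi
    exact_mod_cast choose_cross n t i (by omega)
  calc (∑ i ∈ Finset.range t, (n.choose i : ℝ)) * ((n + 1).choose (t + 1) : ℝ)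
      = ∑ i ∈ Finset.range t, (n.choose i : ℝ) * ((n + 1).choose (t + 1) : ℝ) := by
        rw [Finset.sum_mul]
    _ ≤ ∑ i ∈ Finset.range t, ((n + 1).choose (i + 1) : ℝ) * (n.choose t : ℝ) :=
        Finset.sum_le_sum hterm
    _ = (∑ i ∈ Finset.range t, ((n + 1).choose (i + 1) : ℝ)) * (n.choose t : ℝ) := by
        rw [Finset.sum_mul]
    _ < (∑ i ∈ Finset.range t, ((n + 1).choose (i + 1) : ℝ) + ((n + 1).choose 0 : ℝ)) *
        (n.choose t : ℝ) := by
        apply mul_lt_mul_of_pos_right _ hd1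
        simp
    _ = _ := rfl

lemma S_step (d N j : ℕ) (hjd : j + 1 < d) (hdN : d < N) :
    S d N (j + 1) / ((N - (j + 1) - 1).choose (d - (j + 1) - 1) : ℝ) <
      S d N j / ((N - j - 1).choose (d - j - 1) : ℝ) := by
  have hN1 : N - (j + 1) - 1 = (N - j - 1) - 1 := by omega
  have hd1 : d - (j + 1) - 1 = (d - j - 1) - 1 := by omega
  have hM : N - j - 1 = (N - j - 2) + 1 := by omega
  have hm : d - j - 1 = (d - j - 2) + 1 := by omega
  have hlt : d - j - 2 < N - j - 2 := by omega
  have := step_lemma (N - j - 2) (d - j - 2) hlt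
  unfold S
  rw [hN1, hd1, hM, hm]
  simpa using this

theorem S_ratio_lt_of_le (d k N : ℕ) (hk : 1 ≤ k) (hkd : k < d) (hdN : d < N) :
    S d N k / ((N - k - 1).choose (d - k - 1) : ℝ) <
      S d N 0 / ((N - 1).choose (d - 1) : ℝ) := by
  induction k with
  | zero => omega
  | succ k ih =>
    rcases Nat.eq_zero_or_pos k with hk0 | hk0
    · subst hk0
      simpa using S_step d N 0 (by omega) hdN
    · calc S d N (k + 1) / ((N - (k + 1) - 1).choose (d - (k + 1) - 1) : ℝ)
          < S d N k / ((N - k - 1).choose (d - k - 1) : ℝ) := S_step d N k hkd hdN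
        _ < S d N 0 / ((N - 1).choose (d - 1) : ℝ) := ih hk0 (by omega)
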